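/- Let I = (G,q,c) be an instance of Max E2Lin(q) such that φ_G ≥ φ for some φ > 0 and OPT(I) < 1 − ρ for some 0 < ρ ≤ 1. Then every nonempty subset S' of the vertex set of the label-extended graph G_I with μ_{G_I}(S') ≤ μ_{G_I}/q satisfies φ_{G_I}(S') ≥ ρφ/(6q); that is, φ_{G_I}(q) ≥ ρφ/(6q). -/

import Mathlib

open scoped Classical
open Matrix

noncomputable section

namespace Sublinear

variable {V : Type*}

/-- The degree `d(v)` of a vertex, as a real number. -/
def deg [Fintype V] (G : SimpleGraph V) (v : V) : ℝ :=
  ((Finset.univ.filter fun u => G.Adj v u).card : ℝ)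

/-- The volume `μ_G(S)` of a set of vertices. -/
def vol [Fintype V] (G : SimpleGraph V) (S : Set V) : ℝ :=
  ∑ v ∈ Finset.univ.filter (fun v => v ∈ S), deg G v

/-- The number of ordered adjacent pairs `(u,v)` with `u ∈ S`, `v ∈ T`.
For disjoint `S`, `T` this equals the number `e_G(S,T)` of edges between `S` and `T`. -/
def eB [Fintype V] (G : SimpleGraph V) (S T : Set V) : ℝ :=
  (((Finset.univ : Finset (V × V)).filter
      fun p => p.1 ∈ S ∧ p.2 ∈ T ∧ G.Adj p.1 p.2).card : ℝ)

/-- The number `e_G(S)` of edges with both endpoints in `S`. -/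
def eIn [Fintype V] (G : SimpleGraph V) (S : Set V) : ℝ := eB G S S / 2

/-- The conductance `φ_G(S)` of a set of vertices. -/
def cond [Fintype V] (G : SimpleGraph V) (S : Set V) : ℝ :=
  eB G S Sᶜ / vol G S

/-- The conductance `φ_G` of the graph: the minimum of `φ_G(S)` over nonempty `S`
with `μ_G(S) ≤ μ_G/2`. -/
def conductance [Fintype V] (G : SimpleGraph V) : ℝ :=
  sInf {x | ∃ S : Set V, S.Nonempty ∧ vol G S ≤ vol G Set.univ / 2 ∧ x = cond G S}

/-- The label-extended graph `G_I` of a Max E2Lin(q) instance `I = (G, q, c)`: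
vertices are pairs `(u,i)` with `u` a vertex of `G` and `i ∈ Z_q`, and `(u,i)` is
adjacent to `(v,j)` iff `{u,v}` is an edge of `G` and `j = i + c u v`. -/
def labelExt {V : Type*} (G : SimpleGraph V) {q : ℕ} (c : V → V → ZMod q)
    (hc : ∀ u v, G.Adj u v → c v u = -c u v) : SimpleGraph (V × ZMod q) where
  Adj p p' := G.Adj p.1 p'.1 ∧ p'.2 = p.2 + c p.1 p'.1
  symm := by
    constructor
    rintro ⟨u, i⟩ ⟨v, j⟩ ⟨hadj, hj⟩
    refine ⟨hadj.symm, ?_⟩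
    simp only at hj ⊢
    rw [hc u v hadj, hj]
    ring
  loopless := by
    constructor
    rintro ⟨u, i⟩ ⟨hadj, _⟩
    exact G.loopless.irrefl u hadj


lemma cast_card_filter_congr {α : Type*} [Fintype α] {p q : α → Prop}
    {instp : DecidablePred p} {instq : DecidablePred q} (h : ∀ x, p x ↔ q x) :
    (((Finset.univ.filter p).card : ℝ)) = ((Finset.univ.filter q).card : ℝ) := by
  have := Finset.filter_congr (s := (Finset.univ : Finset α)) (fun x _ => h x)
  exact congrArg (fun t : Finset α => ((t.card : ℝ))) this

section AuxLemmas
variable [Fintype V]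

lemma deg_nonneg (G : SimpleGraph V) (v : V) : 0 ≤ deg G v := Nat.cast_nonneg _

lemma vol_nonneg (G : SimpleGraph V) (S : Set V) : 0 ≤ vol G S :=
  Finset.sum_nonneg fun v _ => deg_nonneg G v

lemma eB_nonneg (G : SimpleGraph V) (S T : Set V) : 0 ≤ eB G S T := Nat.cast_nonneg _

lemma sum_filter_congr {α : Type*} [Fintype α] {p q : α → Prop}
    {instp : DecidablePred p} {instq : DecidablePred q} (f : α → ℝ) (h : ∀ x, p x ↔ q x) :
    ∑ x ∈ Finset.univ.filter p, f x = ∑ x : α, if q x then f x else 0 := by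
  rw [← Finset.sum_filter]
  exact Finset.sum_congr (Finset.filter_congr fun x _ => h x) (fun _ _ => rfl)

lemma card_left (G : SimpleGraph V) {P : V → Prop} {Q : V × V → Prop}
    {instP : DecidablePred P} {instQ : DecidablePred Q}
    (h : ∀ p : V × V, Q p ↔ (P p.1 ∧ G.Adj p.1 p.2)) :
    (((Finset.univ : Finset (V × V)).filter Q).card : ℝ)
      = ∑ u : V, if P u then deg G u else 0 := by
  rw [Finset.card_filter]
  push_cast
  rw [Fintype.sum_prod_type]
  apply Finset.sum_congr rfl
  intro u _
  by_cases hP : P u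
  · rw [if_pos hP]
    unfold deg
    rw [Finset.card_filter]
    push_cast
    apply Finset.sum_congr rfl
    intro v _
    by_cases hv : G.Adj u v
    · rw [if_pos ((h (u, v)).mpr ⟨hP, hv⟩), if_pos hv]
    · rw [if_neg (fun hQ => hv ((h (u, v)).mp hQ).2), if_neg hv]
  · rw [if_neg hP]
    apply Finset.sum_eq_zero
    intro v _
    rw [if_neg (fun hQ => hP ((h (u, v)).mp hQ).1)]

lemma card_right (G : SimpleGraph V) {P : V → Prop} {Q : V × V → Prop}
    {instP : DecidablePred P} {instQ : DecidablePred Q}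
    (h : ∀ p : V × V, Q p ↔ (P p.2 ∧ G.Adj p.1 p.2)) :
    (((Finset.univ : Finset (V × V)).filter Q).card : ℝ)
      = ∑ u : V, if P u then deg G u else 0 := by
  rw [Finset.card_filter]
  push_cast
  rw [Fintype.sum_prod_type_right]
  apply Finset.sum_congr rfl
  intro v _
  by_cases hP : P v
  · rw [if_pos hP]
    unfold deg
    rw [Finset.card_filter]
    push_cast
    apply Finset.sum_congr rfl
    intro u _
    by_cases hv : G.Adj v u
    · rw [if_pos ((h (u, v)).mpr ⟨hP, hv.symm⟩), if_pos hv]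
    · rw [if_neg (fun hQ => hv ((h (u, v)).mp hQ).2.symm), if_neg hv]
  · rw [if_neg hP]
    apply Finset.sum_eq_zero
    intro u _
    rw [if_neg (fun hQ => hP ((h (u, v)).mp hQ).1)]

lemma eB_comm (G : SimpleGraph V) (S T : Set V) : eB G S T = eB G T S := by
  unfold eB
  congr 1
  apply Finset.card_nbij' (fun p => p.swap) (fun p => p.swap)
  · intro p hp; simp only [Finset.coe_filter, Set.mem_setOf_eq, Finset.mem_coe, Finset.mem_filter, Finset.mem_univ, true_and] at hp ⊢
    exact ⟨hp.2.1, hp.1, hp.2.2.symm⟩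
  · intro p hp; simp only [Finset.coe_filter, Set.mem_setOf_eq, Finset.mem_coe, Finset.mem_filter, Finset.mem_univ, true_and] at hp ⊢
    exact ⟨hp.2.1, hp.1, hp.2.2.symm⟩
  · intro p _; rfl
  · intro p _; rfl

lemma eB_le_vol_left (G : SimpleGraph V) (S T : Set V) : eB G S T ≤ vol G S := by
  unfold eB
  have h1 : ((Finset.univ : Finset (V × V)).filter
        fun p => p.1 ∈ S ∧ p.2 ∈ T ∧ G.Adj p.1 p.2).card
      ≤ (((Finset.univ : Finset (V × V)).filter
        fun p => p.1 ∈ S ∧ G.Adj p.1 p.2).card) := by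
    apply Finset.card_le_card
    intro p hp
    simp only [Finset.mem_filter, Finset.mem_univ, true_and] at hp ⊢
    exact ⟨hp.1, hp.2.2⟩
  have h2 : ((((Finset.univ : Finset (V × V)).filter
        fun p => p.1 ∈ S ∧ G.Adj p.1 p.2).card : ℕ) : ℝ)
      = ∑ u : V, if u ∈ S then deg G u else 0 :=
    card_left G (fun p => Iff.rfl)
  have h3 : vol G S = ∑ u : V, if u ∈ S then deg G u else 0 := by
    unfold vol
    exact sum_filter_congr (deg G) (fun x => Iff.rfl)
  rw [h3, ← h2]
  exact_mod_cast h1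

lemma eB_univ_univ (G : SimpleGraph V) : eB G Set.univ Set.univ = vol G Set.univ := by
  unfold eB
  have h3 : vol G Set.univ = ∑ u : V, if True then deg G u else 0 := by
    unfold vol
    exact sum_filter_congr (deg G) (fun x => by simp)
  rw [h3]
  exact card_left G (P := fun _ : V => True) (fun p => by simp)

lemma one_le_vol (G : SimpleGraph V) (hdeg : ∀ v, 1 ≤ deg G v) {S : Set V}
    (hS : S.Nonempty) : 1 ≤ vol G S := by
  obtain ⟨v, hv⟩ := hS
  calc (1 : ℝ) ≤ deg G v := hdeg v
    _ ≤ vol G S := Finset.single_le_sum (fun u _ => deg_nonneg G u)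
        (Finset.mem_filter.mpr ⟨Finset.mem_univ v, hv⟩)

lemma vol_add_compl (G : SimpleGraph V) (S : Set V) :
    vol G S + vol G Sᶜ = vol G Set.univ := by
  unfold vol
  rw [Finset.sum_filter, Finset.sum_filter, Finset.sum_filter, ← Finset.sum_add_distrib]
  congr 1; ext v
  by_cases h : v ∈ S <;> simp [h]

lemma phi_le_cond (G : SimpleGraph V) {φ : ℝ} (hcond : φ ≤ conductance G)
    {S : Set V} (hS : S.Nonempty) (hvol : vol G S ≤ vol G Set.univ / 2) :
    φ ≤ cond G S := by
  refine le_trans hcond (csInf_le ?_ ?_)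
  · refine ⟨0, ?_⟩
    rintro x ⟨T, _, _, rfl⟩
    exact div_nonneg (eB_nonneg G T Tᶜ) (vol_nonneg G T)
  · exact ⟨S, hS, hvol, rfl⟩

lemma cut_lower (G : SimpleGraph V) (hdeg : ∀ v, 1 ≤ deg G v) {φ : ℝ}
    (hcond : φ ≤ conductance G) {S : Set V} (hS : S.Nonempty)
    (hvol : vol G S ≤ vol G Set.univ / 2) : φ * vol G S ≤ eB G S Sᶜ := by
  have hpos : 0 < vol G S := lt_of_lt_of_le one_pos (one_le_vol G hdeg hS)
  have h := phi_le_cond G hcond hS hvol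
  unfold cond at h
  rw [le_div_iff₀ hpos] at h
  linarith

lemma vol_setOf (G : SimpleGraph V) (P : V → Prop) {instP : DecidablePred P} :
    vol G {u | P u} = ∑ u : V, if P u then deg G u else 0 := by
  unfold vol
  exact sum_filter_congr (deg G) (fun x => by simp only [Set.mem_setOf_eq])

lemma phi_le_one (G : SimpleGraph V) (hdeg : ∀ v, 1 ≤ deg G v) {φ : ℝ}
    (hφ : 0 < φ) (hcond : φ ≤ conductance G) (v0 : V) : φ ≤ 1 := by
  -- find a neighbor of v0
  have h1 : (Finset.univ.filter fun u => G.Adj v0 u).Nonempty := by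
    rw [← Finset.card_pos]
    have := hdeg v0
    unfold deg at this
    exact_mod_cast lt_of_lt_of_le zero_lt_one this
  obtain ⟨w, hw⟩ := h1
  have hadj : G.Adj v0 w := (Finset.mem_filter.mp hw).2
  have hne : v0 ≠ w := G.ne_of_adj hadj
  set z : V := if deg G v0 ≤ deg G w then v0 else w with hz
  have hvolz : vol G {z} = deg G z := by
    unfold vol
    rw [Finset.sum_filter]
    simp
  have hsum : deg G v0 + deg G w ≤ vol G Set.univ := by
    unfold vol
    calc deg G v0 + deg G w = ∑ u ∈ ({v0, w} : Finset V), deg G u := by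
          rw [Finset.sum_pair hne]
      _ ≤ _ := by
          apply Finset.sum_le_sum_of_subset_of_nonneg
          · intro u _; simp
          · intro u _ _; exact deg_nonneg G u
  have h2z : 2 * deg G z ≤ vol G Set.univ := by
    rw [hz]
    split_ifs with h <;> linarith
  have hvhalf : vol G {z} ≤ vol G Set.univ / 2 := by rw [hvolz]; linarith
  have h := phi_le_cond G hcond (Set.singleton_nonempty z) hvhalf
  unfold cond at h
  have hzpos : 0 < vol G {z} := lt_of_lt_of_le one_pos (one_le_vol G hdeg (Set.singleton_nonempty z))
  have hle : eB G {z} {z}ᶜ ≤ vol G {z} := eB_le_vol_left G _ _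
  calc φ ≤ eB G {z} {z}ᶜ / vol G {z} := h
    _ ≤ 1 := by rw [div_le_one hzpos]; exact hle


section LabelExt
variable {q : ℕ} [NeZero q] (G : SimpleGraph V) (c : V → V → ZMod q)
  (hc : ∀ u v, G.Adj u v → c v u = -c u v)

lemma deg_labelExt (u : V) (i : ZMod q) :
    deg (labelExt G c hc) (u, i) = deg G u := by
  unfold deg
  congr 1
  apply Finset.card_nbij' (fun p => p.1) (fun v => (v, i + c u v))
  · intro p hp
    rw [Finset.mem_coe, Finset.mem_filter] at hp ⊢
    simp only [Finset.mem_univ, true_and, labelExt] at hp ⊢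
    exact hp.1
  · intro v hv
    rw [Finset.mem_coe, Finset.mem_filter] at hv ⊢
    simp only [Finset.mem_univ, true_and, labelExt] at hv ⊢
    exact ⟨hv, trivial⟩
  · intro p hp
    rw [Finset.mem_coe, Finset.mem_filter] at hp
    simp only [Finset.mem_univ, true_and, labelExt] at hp
    exact Prod.ext rfl hp.2.symm
  · intro v _; rfl

lemma vol_labelExt (S' : Set (V × ZMod q)) :
    vol (labelExt G c hc) S'
      = ∑ u : V, ((Finset.univ.filter fun j : ZMod q => (u, j) ∈ S').card : ℝ) * deg G u := by
  unfold vol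
  rw [Finset.sum_filter, Fintype.sum_prod_type]
  congr 1; ext u
  have : ∀ j : ZMod q, (if (u, j) ∈ S' then deg (labelExt G c hc) (u, j) else 0)
      = (if (u, j) ∈ S' then deg G u else 0) := by
    intro j; by_cases h : (u, j) ∈ S' <;> simp [h, deg_labelExt G c hc]
  rw [Finset.sum_congr rfl fun j _ => this j, ← Finset.sum_filter, Finset.sum_const,
    nsmul_eq_mul]

lemma vol_labelExt_univ :
    vol (labelExt G c hc) Set.univ = q * vol G Set.univ := by
  rw [vol_labelExt G c hc]
  unfold vol
  rw [Finset.mul_sum]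
  simp only [Set.mem_univ, Finset.filter_true]
  apply Finset.sum_congr rfl
  intro u _
  rw [Finset.card_univ, ZMod.card q]

lemma le_cut (S' : Set (V × ZMod q)) (E : Finset (V × V))
    (hE : ∀ p ∈ E, G.Adj p.1 p.2 ∧
      ∃ i, (p.1, i) ∈ S' ∧ (p.2, i + c p.1 p.2) ∉ S') :
    (E.card : ℝ) ≤ eB (labelExt G c hc) S' S'ᶜ := by
  unfold eB
  rw [Nat.cast_le]
  set g : V × V → ZMod q := fun p =>
    if h : ∃ i, (p.1, i) ∈ S' ∧ (p.2, i + c p.1 p.2) ∉ S' then h.choose else 0 with hg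
  apply Finset.card_le_card_of_injOn
    (fun p => ((p.1, g p), (p.2, g p + c p.1 p.2)))
  · intro p hp
    obtain ⟨hadj, hex⟩ := hE p hp
    have hgp : (p.1, g p) ∈ S' ∧ (p.2, g p + c p.1 p.2) ∉ S' := by
      rw [hg]
      simp only [dif_pos hex]
      exact hex.choose_spec
    simp only [Finset.mem_coe, Finset.mem_filter, Finset.mem_univ, true_and]
    exact ⟨hgp.1, hgp.2, hadj, rfl⟩
  · intro p _ p' _ heq
    simp only [Prod.mk.injEq] at heq
    exact Prod.ext heq.1.1 heq.2.1

end LabelExt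
end AuxLemmas


/-- The fraction of the edges of `G` that are satisfied by the assignment `ψ`
in the Max E2Lin(q) instance `(G, q, c)`: an edge `{u,v}` is satisfied if
`ψ u - ψ v = c u v`. -/
def satFrac [Fintype V] (G : SimpleGraph V) {q : ℕ} (c : V → V → ZMod q)
    (ψ : V → ZMod q) : ℝ :=
  (((Finset.univ : Finset (V × V)).filter
      fun p => G.Adj p.1 p.2 ∧ ψ p.1 - ψ p.2 = c p.1 p.2).card : ℝ)
    / eB G Set.univ Set.univ

set_option maxHeartbeats 800000

/-- If `I = (G,q,c)` is a Max E2Lin(q) instance with `φ_G ≥ φ > 0`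
and `OPT(I) < 1 - ρ` for some `0 < ρ ≤ 1`, then every nonempty set `S'` of
vertices of the label-extended graph `G_I` with `μ_{G_I}(S') ≤ μ_{G_I}/q` has
conductance at least `ρφ/(6q)`; that is, `φ_{G_I}(q) ≥ ρφ/(6q)`. -/
theorem e2lin_soundness_small_set_expansion
    {V : Type*} [Fintype V] (G : SimpleGraph V)
    (hdeg : ∀ v, 1 ≤ deg G v)
    (q : ℕ) (hq : 2 ≤ q) [NeZero q]
    (c : V → V → ZMod q) (hc : ∀ u v, G.Adj u v → c v u = -c u v)
    (φ ρ : ℝ) (hφ : 0 < φ) (hcond : φ ≤ conductance G)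
    (hρ0 : 0 < ρ) (hρ1 : ρ ≤ 1)
    (hopt : ∀ ψ : V → ZMod q, satFrac G c ψ < 1 - ρ) :
    ∀ S' : Set (V × ZMod q), S'.Nonempty →
      vol (labelExt G c hc) S' ≤ vol (labelExt G c hc) Set.univ / q →
      ρ * φ / (6 * q) ≤ cond (labelExt G c hc) S' := by
  intro S' hS'ne hS'vol
  classical
  obtain ⟨⟨u0, i0⟩, hu0⟩ := hS'ne
  -- fiber sizes
  obtain ⟨s, hs⟩ : ∃ s : V → ℕ,
      s = fun u => (Finset.univ.filter fun j : ZMod q => (u, j) ∈ S').card := ⟨_, rfl⟩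
  have hs_pos : ∀ u (j : ZMod q), (u, j) ∈ S' → 0 < s u := by
    intro u j hj
    simp only [hs]
    exact Finset.card_pos.mpr ⟨j, Finset.mem_filter.mpr ⟨Finset.mem_univ _, hj⟩⟩
  have hs_zero : ∀ u (j : ZMod q), s u = 0 → (u, j) ∉ S' := by
    intro u j h0 hj
    have := hs_pos u j hj
    omega
  have hs_le_q : ∀ u, s u ≤ q := by
    intro u
    simp only [hs]
    calc (Finset.univ.filter fun j : ZMod q => (u, j) ∈ S').card
        ≤ (Finset.univ : Finset (ZMod q)).card := Finset.card_filter_le _ _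
      _ = q := by rw [Finset.card_univ, ZMod.card q]
  -- partial assignment
  have hψex : ∃ ψ : V → ZMod q, ∀ u, 0 < s u → (u, ψ u) ∈ S' := by
    refine ⟨fun u => if h : ∃ j : ZMod q, (u, j) ∈ S' then h.choose else 0, fun u hu => ?_⟩
    have hne : ∃ j : ZMod q, (u, j) ∈ S' := by
      simp only [hs] at hu
      obtain ⟨j, hj⟩ := Finset.card_pos.mp hu
      exact ⟨j, (Finset.mem_filter.mp hj).2⟩
    simp only [dif_pos hne]
    exact hne.choose_spec
  obtain ⟨ψ, hψ⟩ := hψex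
  have hψuniq : ∀ u (j : ZMod q), s u = 1 → (u, j) ∈ S' → j = ψ u := by
    intro u j h1 hj
    have hcard : s u ≤ 1 := by omega
    simp only [hs] at hcard
    exact Finset.card_le_one.mp hcard j
      (Finset.mem_filter.mpr ⟨Finset.mem_univ _, hj⟩) (ψ u)
      (Finset.mem_filter.mpr ⟨Finset.mem_univ _, hψ u (by omega)⟩)
  obtain ⟨A, hA⟩ : ∃ A : Set V, A = {u | 0 < s u} := ⟨_, rfl⟩
  obtain ⟨D, hD⟩ : ∃ D : Set V, D = {u | 2 ≤ s u} := ⟨_, rfl⟩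
  -- basic positivity
  have hdeg' : ∀ p : V × ZMod q, 1 ≤ deg (labelExt G c hc) p := by
    rintro ⟨u, i⟩
    rw [deg_labelExt G c hc]
    exact hdeg u
  have hμpos : (0:ℝ) < vol G Set.univ :=
    lt_of_lt_of_le one_pos (one_le_vol G hdeg ⟨u0, trivial⟩)
  have hq0 : (0:ℝ) < (q:ℝ) := by positivity
  have hq2 : (2:ℝ) ≤ (q:ℝ) := by exact_mod_cast hq
  have hσμ : vol (labelExt G c hc) S' ≤ vol G Set.univ := by
    rw [vol_labelExt_univ G c hc, mul_div_cancel_left₀ _ (ne_of_gt hq0)] at hS'vol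
    exact hS'vol
  have hσpos : 0 < vol (labelExt G c hc) S' :=
    lt_of_lt_of_le one_pos (one_le_vol _ hdeg' ⟨(u0, i0), hu0⟩)
  -- sum expressions
  have hσs : vol (labelExt G c hc) S' = ∑ u : V, (s u : ℝ) * deg G u := by
    rw [vol_labelExt G c hc]
    simp only [hs]
  have hvolA : vol G A = ∑ u : V, if 0 < s u then deg G u else 0 := by rw [hA]; exact vol_setOf G _
  have hvolD : vol G D = ∑ u : V, if 2 ≤ s u then deg G u else 0 := by rw [hD]; exact vol_setOf G _
  have hvolAc : vol G Aᶜ = ∑ u : V, if s u = 0 then deg G u else 0 := by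
    unfold vol
    rw [Finset.sum_filter]
    apply Finset.sum_congr rfl
    intro u _
    have hiff : u ∈ Aᶜ ↔ s u = 0 := by
      rw [hA]
      simp only [Set.mem_compl_iff, Set.mem_setOf_eq, not_lt]
      omega
    by_cases h : s u = 0
    · rw [if_pos (hiff.mpr h), if_pos h]
    · rw [if_neg (fun hmem => h (hiff.mp hmem)), if_neg h]
  have hασ : vol G A ≤ vol (labelExt G c hc) S' := by
    rw [hvolA, hσs]
    apply Finset.sum_le_sum
    intro u _
    split_ifs with h
    · have h1 : (1:ℝ) ≤ (s u : ℝ) := by exact_mod_cast h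
      nlinarith [deg_nonneg G u]
    · exact mul_nonneg (Nat.cast_nonneg _) (deg_nonneg G u)
  have hσqα : vol (labelExt G c hc) S' ≤ (q:ℝ) * vol G A := by
    rw [hvolA, hσs, Finset.mul_sum]
    apply Finset.sum_le_sum
    intro u _
    split_ifs with h
    · have h1 : ((s u : ℕ) : ℝ) ≤ (q:ℝ) := by exact_mod_cast hs_le_q u
      exact mul_le_mul_of_nonneg_right h1 (deg_nonneg G u)
    · have h0 : s u = 0 := by omega
      simp [h0]
  have hδσ : 2 * vol G D ≤ vol (labelExt G c hc) S' := by
    rw [hvolD, hσs, Finset.mul_sum]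
    apply Finset.sum_le_sum
    intro u _
    split_ifs with h
    · have h1 : (2:ℝ) ≤ (s u : ℝ) := by exact_mod_cast h
      nlinarith [deg_nonneg G u]
    · have := mul_nonneg (Nat.cast_nonneg (s u) : (0:ℝ) ≤ (s u : ℝ)) (deg_nonneg G u)
      linarith
  have hαβ : vol G A + vol G Aᶜ = vol G Set.univ := vol_add_compl G A
  have hcut0 : 0 ≤ eB (labelExt G c hc) S' S'ᶜ := eB_nonneg _ _ _
  -- injection 1 : A vs Aᶜ
  have hE1 : eB G A Aᶜ ≤ eB (labelExt G c hc) S' S'ᶜ := by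
    have h := le_cut G c hc S'
      (Finset.univ.filter fun p : V × V => p.1 ∈ A ∧ ¬ p.2 ∈ A ∧ G.Adj p.1 p.2) ?_
    · refine le_trans (le_of_eq ?_) h
      unfold eB
      exact cast_card_filter_congr (fun p => by rw [Set.mem_compl_iff])
    · intro p hp
      obtain ⟨h1, h2, hadj⟩ := (Finset.mem_filter.mp hp).2
      rw [hA] at h1
      refine ⟨hadj, ψ p.1, hψ p.1 h1, ?_⟩
      apply hs_zero
      rw [hA] at h2
      have h2' : ¬ (0 < s p.2) := h2
      omega
  -- injection 2 : D vs Dᶜ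
  have hE2 : eB G D Dᶜ ≤ eB (labelExt G c hc) S' S'ᶜ := by
    have h := le_cut G c hc S'
      (Finset.univ.filter fun p : V × V => p.1 ∈ D ∧ ¬ p.2 ∈ D ∧ G.Adj p.1 p.2) ?_
    · refine le_trans (le_of_eq ?_) h
      unfold eB
      exact cast_card_filter_congr (fun p => by rw [Set.mem_compl_iff])
    · intro p hp
      obtain ⟨h1, h2, hadj⟩ := (Finset.mem_filter.mp hp).2
      rw [hD] at h1
      rw [hD] at h2
      have h1' : 2 ≤ s p.1 := h1
      have h2' : ¬ (2 ≤ s p.2) := h2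
      refine ⟨hadj, ?_⟩
      by_contra hno
      push_neg at hno
      have hcard : s p.1 ≤ s p.2 := by
        rw [hs]
        apply Finset.card_le_card_of_injOn (fun j => j + c p.1 p.2)
        · intro j hj
          have hjS : (p.1, j) ∈ S' := (Finset.mem_filter.mp hj).2
          have := hno j hjS
          exact Finset.mem_filter.mpr ⟨Finset.mem_univ _, by simpa using this⟩
        · intro a _ b _ hab
          exact add_right_cancel hab
      omega
  -- injection 3 : unsatisfied singleton-fiber pairs
  have hTC : ((Finset.univ.filter fun p : V × V => G.Adj p.1 p.2 ∧ s p.1 = 1 ∧ s p.2 = 1 ∧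
        ¬ ψ p.2 = ψ p.1 + c p.1 p.2).card : ℝ) ≤ eB (labelExt G c hc) S' S'ᶜ := by
    apply le_cut G c hc S'
    intro p hp
    obtain ⟨hadj, h1, h2, hne⟩ := (Finset.mem_filter.mp hp).2
    refine ⟨hadj, ψ p.1, hψ p.1 (by omega), ?_⟩
    intro hmem
    exact hne ((hψuniq p.2 _ h2 hmem).symm)
  -- the unsatisfied edge count
  have hsat := hopt (fun u => - ψ u)
  unfold satFrac at hsat
  rw [eB_univ_univ] at hsat
  have hSatEq : ((Finset.univ.filter fun p : V × V =>
        G.Adj p.1 p.2 ∧ (fun u => - ψ u) p.1 - (fun u => - ψ u) p.2 = c p.1 p.2).card : ℝ)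
      = ((Finset.univ.filter fun p : V × V =>
        G.Adj p.1 p.2 ∧ ψ p.2 = ψ p.1 + c p.1 p.2).card : ℝ) := by
    apply cast_card_filter_congr
    intro p
    apply and_congr_right
    intro _
    simp only
    rw [neg_sub_neg, sub_eq_iff_eq_add']
  rw [hSatEq] at hsat
  rw [div_lt_iff₀ hμpos] at hsat
  have hsplit : (Finset.univ.filter fun p : V × V =>
        G.Adj p.1 p.2 ∧ ψ p.2 = ψ p.1 + c p.1 p.2).card
      + (Finset.univ.filter fun p : V × V =>
        G.Adj p.1 p.2 ∧ ¬ ψ p.2 = ψ p.1 + c p.1 p.2).card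
      = (Finset.univ.filter fun p : V × V => G.Adj p.1 p.2).card := by
    rw [← Finset.filter_filter, ← Finset.filter_filter]
    exact Finset.card_filter_add_card_filter_not _
  have hNadj : (((Finset.univ.filter fun p : V × V => G.Adj p.1 p.2).card : ℕ) : ℝ)
      = vol G Set.univ := by
    rw [← eB_univ_univ G]
    unfold eB
    apply cast_card_filter_congr
    intro p
    simp
  have hUnsat : ρ * vol G Set.univ < ((Finset.univ.filter fun p : V × V =>
        G.Adj p.1 p.2 ∧ ¬ ψ p.2 = ψ p.1 + c p.1 p.2).card : ℝ) := by
    have h1 : ((Finset.univ.filter fun p : V × V =>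
        G.Adj p.1 p.2 ∧ ψ p.2 = ψ p.1 + c p.1 p.2).card : ℝ)
        + ((Finset.univ.filter fun p : V × V =>
        G.Adj p.1 p.2 ∧ ¬ ψ p.2 = ψ p.1 + c p.1 p.2).card : ℝ)
        = vol G Set.univ := by
      rw [← hNadj]
      exact_mod_cast congrArg (fun n : ℕ => (n : ℝ)) hsplit
    linarith
  -- union bound for unsatisfied pairs
  have hUnion : ((Finset.univ.filter fun p : V × V =>
        G.Adj p.1 p.2 ∧ ¬ ψ p.2 = ψ p.1 + c p.1 p.2).card : ℝ)
      ≤ ((Finset.univ.filter fun p : V × V => ¬ s p.1 = 1 ∧ G.Adj p.1 p.2).card : ℝ)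
        + ((Finset.univ.filter fun p : V × V => ¬ s p.2 = 1 ∧ G.Adj p.1 p.2).card : ℝ)
        + ((Finset.univ.filter fun p : V × V => G.Adj p.1 p.2 ∧ s p.1 = 1 ∧ s p.2 = 1 ∧
        ¬ ψ p.2 = ψ p.1 + c p.1 p.2).card : ℝ) := by
    have hsub : (Finset.univ.filter fun p : V × V =>
        G.Adj p.1 p.2 ∧ ¬ ψ p.2 = ψ p.1 + c p.1 p.2)
        ⊆ ((Finset.univ.filter fun p : V × V => ¬ s p.1 = 1 ∧ G.Adj p.1 p.2)
          ∪ (Finset.univ.filter fun p : V × V => ¬ s p.2 = 1 ∧ G.Adj p.1 p.2))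
          ∪ (Finset.univ.filter fun p : V × V => G.Adj p.1 p.2 ∧ s p.1 = 1 ∧ s p.2 = 1 ∧
            ¬ ψ p.2 = ψ p.1 + c p.1 p.2) := by
      intro p hp
      simp only [Finset.mem_filter, Finset.mem_univ, true_and, Finset.mem_union] at hp ⊢
      by_cases h1 : s p.1 = 1
      · by_cases h2 : s p.2 = 1
        · exact Or.inr ⟨hp.1, h1, h2, hp.2⟩
        · exact Or.inl (Or.inr ⟨h2, hp.1⟩)
      · exact Or.inl (Or.inl ⟨h1, hp.1⟩)
    have h := Finset.card_le_card hsub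
    have h2 := le_trans h (le_trans (Finset.card_union_le _ _)
      (add_le_add_left (Finset.card_union_le _ _) _))
    exact_mod_cast h2
  have hU1 : ((Finset.univ.filter fun p : V × V => ¬ s p.1 = 1 ∧ G.Adj p.1 p.2).card : ℝ)
      ≤ vol G Aᶜ + vol G D := by
    refine le_of_eq_of_le (card_left G (P := fun u => ¬ s u = 1) (instP := inferInstance) (fun p => Iff.rfl)) ?_
    rw [hvolAc, hvolD, ← Finset.sum_add_distrib]
    apply Finset.sum_le_sum
    intro u _
    have := deg_nonneg G u
    split_ifs <;> first | linarith | (exfalso; omega)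
  have hU2 : ((Finset.univ.filter fun p : V × V => ¬ s p.2 = 1 ∧ G.Adj p.1 p.2).card : ℝ)
      ≤ vol G Aᶜ + vol G D := by
    refine le_of_eq_of_le (card_right G (P := fun u => ¬ s u = 1) (instP := inferInstance) (fun p => Iff.rfl)) ?_
    rw [hvolAc, hvolD, ← Finset.sum_add_distrib]
    apply Finset.sum_le_sum
    intro u _
    have := deg_nonneg G u
    split_ifs <;> first | linarith | (exfalso; omega)
  have hkey : ρ * vol G Set.univ
      ≤ 2 * vol G Aᶜ + 2 * vol G D + eB (labelExt G c hc) S' S'ᶜ := by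
    linarith [hUnsat, hUnion, hU1, hU2, hTC]
  -- conductance facts
  have hAne : A.Nonempty := ⟨u0, by rw [hA]; exact hs_pos u0 i0 hu0⟩
  have hφ1 : φ ≤ 1 := phi_le_one G hdeg hφ hcond u0
  have hvolAnn : 0 ≤ vol G A := vol_nonneg G A
  have hvolAcnn : 0 ≤ vol G Aᶜ := vol_nonneg G Aᶜ
  have hvolDnn : 0 ≤ vol G D := vol_nonneg G D
  -- goal reduction
  unfold cond
  rw [div_le_div_iff₀ (by positivity) hσpos]
  set Cut := eB (labelExt G c hc) S' S'ᶜ with hCut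
  set σ := vol (labelExt G c hc) S' with hσ
  set μ := vol G Set.univ with hμ
  by_cases hcase : vol G A ≤ μ / 2
  · -- small A : conductance of A directly
    have h := cut_lower G hdeg hcond hAne hcase
    have hchain : φ * vol G A ≤ Cut := le_trans h hE1
    have t1 : 0 ≤ φ * σ := mul_nonneg hφ.le hσpos.le
    have t2 : ρ * (φ * σ) ≤ 1 * (φ * σ) := mul_le_mul_of_nonneg_right hρ1 t1
    have t3 : φ * σ ≤ φ * ((q : ℝ) * vol G A) := mul_le_mul_of_nonneg_left hσqα hφ.le
    have t4 : (q : ℝ) * (φ * vol G A) ≤ (q : ℝ) * Cut :=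
      mul_le_mul_of_nonneg_left hchain hq0.le
    have t5 : 0 ≤ (q : ℝ) * Cut := mul_nonneg hq0.le hcut0
    linarith
  · push_neg at hcase
    have hβhalf : vol G Aᶜ ≤ μ / 2 := by linarith
    have hCutβ : φ * vol G Aᶜ ≤ Cut := by
      rcases Set.eq_empty_or_nonempty Aᶜ with he | hne
      · have h0 : vol G Aᶜ = 0 := by
          rw [he]; unfold vol; simp
        rw [h0, mul_zero]; exact hcut0
      · have h := cut_lower G hdeg hcond hne hβhalf
        rw [compl_compl, eB_comm] at h
        exact le_trans h hE1
    have hCutδ : φ * vol G D ≤ Cut := by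
      rcases Set.eq_empty_or_nonempty D with he | hne
      · have h0 : vol G D = 0 := by
          rw [he]; unfold vol; simp
        rw [h0, mul_zero]; exact hcut0
      · have hDhalf : vol G D ≤ μ / 2 := by linarith
        have h := cut_lower G hdeg hcond hne hDhalf
        exact le_trans h hE2
    have t6 : ρ * φ * σ ≤ ρ * φ * μ :=
      mul_le_mul_of_nonneg_left hσμ (mul_nonneg hρ0.le hφ.le)
    have t9 : (8 : ℝ) * Cut ≤ (6 * (q : ℝ)) * Cut :=
      mul_le_mul_of_nonneg_right (by linarith) hcut0
    by_cases hb : ρ * μ / 8 ≤ vol G Aᶜ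
    · have t7 : φ * (ρ * μ / 8) ≤ Cut :=
        le_trans (mul_le_mul_of_nonneg_left hb hφ.le) hCutβ
      linarith
    · by_cases hd : ρ * μ / 8 ≤ vol G D
      · have t7 : φ * (ρ * μ / 8) ≤ Cut :=
          le_trans (mul_le_mul_of_nonneg_left hd hφ.le) hCutδ
        linarith
      · push_neg at hb hd
        have hCuthalf : ρ * μ / 2 ≤ Cut := by linarith
        have t8 : (ρ * μ) * φ ≤ (ρ * μ) * 1 :=
          mul_le_mul_of_nonneg_left hφ1 (mul_nonneg hρ0.le hμpos.le)
        have t10 : (2 : ℝ) * Cut ≤ (6 * (q : ℝ)) * Cut :=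
          mul_le_mul_of_nonneg_right (by linarith) hcut0
        linarith

end Sublinear
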